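/- In the two-product logit model, if γ1 < 0 and μ > μ', then the fraction of inside purchasers choosing product 1 is strictly larger for type μ: s_1|μ / (s_1|μ + s_2|μ) > s_1|μ' / (s_1|μ' + s_2|μ'). Equivalently, the three-way MLR-type comparison s_1|μ / s_1|μ' > (s_1|μ + s_2|μ)/(s_1|μ' + s_2|μ') > s_2|μ / s_2|μ' holds. -/

import Mathlib

/-- Conditional logit share of product 1 (type μ). -/
noncomputable def s1 (a b γ0 γ1 p1 p2 μ : ℝ) : ℝ :=
  Real.exp (a - b * p1 + μ) /
    (1 + Real.exp (a - b * p1 + μ) + Real.exp (a - b * p2 + γ0 + γ1 * μ + μ))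

/-- Conditional logit share of product 2 (type μ). -/
noncomputable def s2 (a b γ0 γ1 p1 p2 μ : ℝ) : ℝ :=
  Real.exp (a - b * p2 + γ0 + γ1 * μ + μ) /
    (1 + Real.exp (a - b * p1 + μ) + Real.exp (a - b * p2 + γ0 + γ1 * μ + μ))

/-- If `γ1 < 0`, higher types have a larger fraction of inside purchasers choosing
product 1, and the three-way MLR comparison holds. -/
theorem inside_composition_mlr (a b γ0 γ1 p1 p2 μ μ' : ℝ)
    (hb : 0 < b) (hγ1 : γ1 < 0) (hμ : μ' < μ) :
    (s1 a b γ0 γ1 p1 p2 μ / (s1 a b γ0 γ1 p1 p2 μ + s2 a b γ0 γ1 p1 p2 μ)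
      > s1 a b γ0 γ1 p1 p2 μ' / (s1 a b γ0 γ1 p1 p2 μ' + s2 a b γ0 γ1 p1 p2 μ')) ∧
    (s1 a b γ0 γ1 p1 p2 μ / s1 a b γ0 γ1 p1 p2 μ'
      > (s1 a b γ0 γ1 p1 p2 μ + s2 a b γ0 γ1 p1 p2 μ)
          / (s1 a b γ0 γ1 p1 p2 μ' + s2 a b γ0 γ1 p1 p2 μ')) ∧
    ((s1 a b γ0 γ1 p1 p2 μ + s2 a b γ0 γ1 p1 p2 μ)
          / (s1 a b γ0 γ1 p1 p2 μ' + s2 a b γ0 γ1 p1 p2 μ')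
      > s2 a b γ0 γ1 p1 p2 μ / s2 a b γ0 γ1 p1 p2 μ') := by
  unfold s1 s2
  set A := Real.exp (a - b * p1 + μ) with hA
  set B := Real.exp (a - b * p2 + γ0 + γ1 * μ + μ) with hB
  set A' := Real.exp (a - b * p1 + μ') with hA'
  set B' := Real.exp (a - b * p2 + γ0 + γ1 * μ' + μ') with hB'
  have hApos : 0 < A := Real.exp_pos _
  have hBpos : 0 < B := Real.exp_pos _
  have hA'pos : 0 < A' := Real.exp_pos _
  have hB'pos : 0 < B' := Real.exp_pos _
  have hD : 0 < 1 + A + B := by positivity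
  have hD' : 0 < 1 + A' + B' := by positivity
  have hkey : A' * B < A * B' := by
    rw [hA, hB, hA', hB', ← Real.exp_add, ← Real.exp_add]
    apply Real.exp_lt_exp.mpr
    nlinarith
  refine ⟨?_, ?_, ?_⟩
  · rw [gt_iff_lt, div_lt_div_iff₀ (by positivity) (by positivity)]
    rw [← add_div, ← add_div]
    field_simp
    nlinarith [mul_pos hD hD', mul_pos hApos hB'pos, mul_pos hA'pos hBpos]
  · rw [gt_iff_lt, div_lt_div_iff₀ (by positivity) (by positivity)]
    field_simp
    nlinarith [mul_pos hD hD']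
  · rw [gt_iff_lt, div_lt_div_iff₀ (by positivity) (by positivity)]
    field_simp
    nlinarith [mul_pos hD hD']
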